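/- Under the conditions ε ≤ g̃(Z) ≤ 1−ε a.s. and the product-rate condition ‖Q̃(d,·)−Q(d,·)‖_{P,2}·‖g̃−g‖_{P,2} ≤ δ·n^{−1/2} for d ∈ {0,1}, the absolute bias satisfies |E[φ(Y,T,Z;ψ₀,Q̃,g̃)]| ≤ (2/ε)·δ·n^{−1/2}. -/

import Mathlib

open MeasureTheory ProbabilityTheory
open scoped ENNReal

lemma key_aux {Ω : Type*} [mΩ : MeasurableSpace Ω] (μ : Measure Ω) [IsProbabilityMeasure μ]
    (Z : Ω → ℝ) (hZ : Measurable Z) (h : ℝ → ℝ) (hh : Measurable h) (f : Ω → ℝ)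
    (hf : Integrable f μ) (hprod : Integrable (fun ω => h (Z ω) * f ω) μ) :
    ∫ ω, h (Z ω) * f ω ∂μ
      = ∫ ω, h (Z ω) * (μ[f|MeasurableSpace.comap Z inferInstance]) ω ∂μ := by
  set m := MeasurableSpace.comap Z inferInstance with hm_def
  have hm : m ≤ mΩ := hZ.comap_le
  have hZm : @Measurable Ω ℝ m _ Z := fun s hs => ⟨s, hs, rfl⟩
  have hsm : StronglyMeasurable[m] (fun ω => h (Z ω)) :=
    ((hh.comp hZm).stronglyMeasurable : StronglyMeasurable[m] (h ∘ Z))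
  have hmul := condExp_mul_of_stronglyMeasurable_left (μ := μ) hsm
      (by exact hprod : Integrable ((fun ω => h (Z ω)) * f) μ) hf
  calc ∫ ω, h (Z ω) * f ω ∂μ
      = ∫ ω, (μ[(fun ω => h (Z ω)) * f|m]) ω ∂μ :=
        (integral_condExp (f := (fun ω => h (Z ω)) * f) hm).symm
    _ = ∫ ω, ((fun ω => h (Z ω)) * μ[f|m]) ω ∂μ := integral_congr_ae hmul
    _ = ∫ ω, h (Z ω) * (μ[f|m]) ω ∂μ := rfl

lemma cs_aux {Ω : Type*} [MeasurableSpace Ω] (μ : Measure Ω) (u v : Ω → ℝ)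
    (hu : MemLp u 2 μ) (hv : MemLp v 2 μ) :
    ∫ ω, |u ω| * |v ω| ∂μ
      ≤ Real.sqrt (∫ ω, u ω ^ 2 ∂μ) * Real.sqrt (∫ ω, v ω ^ 2 ∂μ) := by
  have h2 : ENNReal.ofReal (2:ℝ) = 2 := by norm_num
  have hpq : Real.HolderConjugate 2 2 := Real.HolderConjugate.two_two
  have hu' : MemLp (fun ω => |u ω|) (ENNReal.ofReal (2:ℝ)) μ := by
    rw [h2]; simpa [Real.norm_eq_abs] using hu.norm
  have hv' : MemLp (fun ω => |v ω|) (ENNReal.ofReal (2:ℝ)) μ := by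
    rw [h2]; simpa [Real.norm_eq_abs] using hv.norm
  have := integral_mul_le_Lp_mul_Lq_of_nonneg hpq
    (ae_of_all _ fun ω => abs_nonneg (u ω)) (ae_of_all _ fun ω => abs_nonneg (v ω)) hu' hv'
  have hru : ∫ ω, |u ω| ^ (2:ℝ) ∂μ = ∫ ω, u ω ^ 2 ∂μ := by
    refine integral_congr_ae (ae_of_all _ fun ω => ?_)
    show |u ω| ^ (2:ℝ) = u ω ^ 2
    rw [Real.rpow_two, sq_abs]
  have hrv : ∫ ω, |v ω| ^ (2:ℝ) ∂μ = ∫ ω, v ω ^ 2 ∂μ := by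
    refine integral_congr_ae (ae_of_all _ fun ω => ?_)
    show |v ω| ^ (2:ℝ) = v ω ^ 2
    rw [Real.rpow_two, sq_abs]
  rw [hru, hrv] at this
  calc ∫ ω, |u ω| * |v ω| ∂μ
      ≤ (∫ ω, u ω ^ 2 ∂μ) ^ ((1:ℝ)/2) * (∫ ω, v ω ^ 2 ∂μ) ^ ((1:ℝ)/2) := by
        simpa using this
    _ = Real.sqrt (∫ ω, u ω ^ 2 ∂μ) * Real.sqrt (∫ ω, v ω ^ 2 ∂μ) := by
        rw [Real.sqrt_eq_rpow, Real.sqrt_eq_rpow]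

lemma split_aux {Ω : Type*} [MeasurableSpace Ω] {μ : Measure Ω} (a b c d : Ω → ℝ)
    (ia : Integrable a μ) (ib : Integrable b μ) (ic : Integrable c μ) (idd : Integrable d μ) :
    ∫ ω, (a ω + (b ω + (c ω + d ω))) ∂μ
      = ∫ ω, a ω ∂μ + (∫ ω, b ω ∂μ + (∫ ω, c ω ∂μ + ∫ ω, d ω ∂μ)) := by
  have h1 : Integrable (fun ω => c ω + d ω) μ := ic.add idd
  have h2 : Integrable (fun ω => b ω + (c ω + d ω)) μ := ib.add h1
  rw [integral_add ia h2, integral_add ib h1, integral_add ic idd]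


set_option maxHeartbeats 1000000 in
/-- Under positivity `ε ≤ g'(Z) ≤ 1-ε` a.s. and the product-rate condition
`‖Q'(d,·) - Q(d,·)‖₂ · ‖g' - g‖₂ ≤ δ n^{-1/2}` for `d ∈ {0,1}`, the absolute bias of the
A-IPTW functional satisfies `|E[φ(ψ₀, Q', g')]| ≤ (2/ε) δ n^{-1/2}`. -/
theorem stmt5
    {Ω : Type*} [MeasurableSpace Ω]
    (μ : Measure Ω) [IsProbabilityMeasure μ]
    (Y T Z : Ω → ℝ)
    (hY : Measurable Y) (hT : Measurable T) (hZ : Measurable Z)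
    (hTbin : ∀ ω, T ω = 0 ∨ T ω = 1)
    (ε : ℝ) (hε : 0 < ε)
    -- true propensity score, bounded away from 0 and 1
    (g : ℝ → ℝ) (hg : Measurable g)
    (hgdef : (fun ω => g (Z ω)) =ᵐ[μ] μ[T | MeasurableSpace.comap Z inferInstance])
    (hpos : ∀ᵐ ω ∂μ, ε ≤ g (Z ω) ∧ g (Z ω) ≤ 1 - ε)
    -- true conditional expected outcomes: E[Y 1{T=t} | Z] = Q t (Z) ⬝ P(T=t | Z)
    (Q : ℝ → ℝ → ℝ) (hQmeas : ∀ t, Measurable (Q t))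
    (hQ1 : μ[fun ω => (if T ω = 1 then (1:ℝ) else 0) * Y ω |
        MeasurableSpace.comap Z inferInstance] =ᵐ[μ] fun ω => Q 1 (Z ω) * g (Z ω))
    (hQ0 : μ[fun ω => (if T ω = 0 then (1:ℝ) else 0) * Y ω |
        MeasurableSpace.comap Z inferInstance] =ᵐ[μ] fun ω => Q 0 (Z ω) * (1 - g (Z ω)))
    -- candidate (possibly misspecified) nuisance functions
    (Q' : ℝ → ℝ → ℝ) (hQ'meas : ∀ t, Measurable (Q' t))
    (g' : ℝ → ℝ) (hg' : Measurable g')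
    (hpos' : ∀ᵐ ω ∂μ, ε ≤ g' (Z ω) ∧ g' (Z ω) ≤ 1 - ε)
    -- square integrability
    (hY2 : MemLp Y 2 μ)
    (hQ2 : ∀ t, t = 0 ∨ t = 1 → MemLp (fun ω => Q t (Z ω)) 2 μ)
    (hQ'2 : ∀ t, t = 0 ∨ t = 1 → MemLp (fun ω => Q' t (Z ω)) 2 μ)
    -- the true ATE
    (ψ₀ : ℝ) (hψ₀ : ψ₀ = ∫ ω, (Q 1 (Z ω) - Q 0 (Z ω)) ∂μ)
    -- sample size and rate
    (n : ℕ) (hn : 0 < n) (δ : ℝ) (hδ : 0 < δ)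
    -- the product-rate condition on L²(P) errors
    (hrate : ∀ d : ℝ, d = 0 ∨ d = 1 →
      Real.sqrt (∫ ω, (Q' d (Z ω) - Q d (Z ω)) ^ 2 ∂μ)
          * Real.sqrt (∫ ω, (g' (Z ω) - g (Z ω)) ^ 2 ∂μ)
        ≤ δ * (n : ℝ) ^ (-(1:ℝ)/2)) :
    |∫ ω, (T ω / g' (Z ω) * (Y ω - Q' 1 (Z ω))
        - (1 - T ω) / (1 - g' (Z ω)) * (Y ω - Q' 0 (Z ω))
        + (Q' 1 (Z ω) - Q' 0 (Z ω)) - ψ₀) ∂μ|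
      ≤ 2 / ε * δ * (n : ℝ) ^ (-(1:ℝ)/2) := by
  classical
  have htwo : (1:ℝ≥0∞) ≤ 2 := one_le_two
  have hYint : Integrable Y μ := hY2.integrable htwo
  have hT1 : ∀ ω, |T ω| ≤ 1 := fun ω => by rcases hTbin ω with h | h <;> simp [h]
  have hTint : Integrable T μ := by
    refine (integrable_const (1:ℝ)).mono' hT.aestronglyMeasurable ?_
    exact ae_of_all _ fun ω => by simpa [Real.norm_eq_abs] using hT1 ω
  have hind1 : Measurable (fun ω => (if T ω = 1 then (1:ℝ) else 0)) :=
    Measurable.ite (hT (measurableSet_singleton 1)) measurable_const measurable_const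
  have hind0 : Measurable (fun ω => (if T ω = 0 then (1:ℝ) else 0)) :=
    Measurable.ite (hT (measurableSet_singleton 0)) measurable_const measurable_const
  have hf1int : Integrable (fun ω => (if T ω = 1 then (1:ℝ) else 0) * Y ω) μ := by
    refine hYint.norm.mono' (hind1.mul hY).aestronglyMeasurable (ae_of_all _ fun ω => ?_)
    by_cases h : T ω = 1 <;> simp [h]
  have hf0int : Integrable (fun ω => (if T ω = 0 then (1:ℝ) else 0) * Y ω) μ := by
    refine hYint.norm.mono' (hind0.mul hY).aestronglyMeasurable (ae_of_all _ fun ω => ?_)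
    by_cases h : T ω = 0 <;> simp [h]
  have hQ'1int : Integrable (fun ω => Q' 1 (Z ω)) μ := (hQ'2 1 (Or.inr rfl)).integrable htwo
  have hQ'0int : Integrable (fun ω => Q' 0 (Z ω)) μ := (hQ'2 0 (Or.inl rfl)).integrable htwo
  have hQ1int : Integrable (fun ω => Q 1 (Z ω)) μ := (hQ2 1 (Or.inr rfl)).integrable htwo
  have hQ0int : Integrable (fun ω => Q 0 (Z ω)) μ := (hQ2 0 (Or.inl rfl)).integrable htwo
  have hdivb : ∀ a b : ℝ, |a| ≤ 1 → ε ≤ b → ‖a / b‖ ≤ ε⁻¹ := by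
    intro a b ha hb
    rw [Real.norm_eq_abs, abs_div, ← one_div]
    exact div_le_div₀ zero_le_one ha hε (le_trans hb (le_abs_self b))
  -- integrability of the pieces with estimated nuisances
  have ia : Integrable (fun ω => (1 / g' (Z ω))
      * ((if T ω = 1 then (1:ℝ) else 0) * Y ω)) μ := by
    refine hf1int.bdd_mul (c := ε⁻¹) ((measurable_const.div (hg'.comp hZ)).aestronglyMeasurable) ?_
    filter_upwards [hpos'] with ω h
    exact hdivb 1 _ (by norm_num) h.1
  have ib : Integrable (fun ω => (-(1 / (1 - g' (Z ω))))
      * ((if T ω = 0 then (1:ℝ) else 0) * Y ω)) μ := by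
    refine hf0int.bdd_mul (c := ε⁻¹)
      (((measurable_const.div (measurable_const.sub (hg'.comp hZ)))).neg.aestronglyMeasurable) ?_
    filter_upwards [hpos'] with ω h
    rw [norm_neg]
    exact hdivb 1 _ (by norm_num) (by linarith [h.2])
  have ic1 : Integrable (fun ω => (T ω / g' (Z ω)) * Q' 1 (Z ω)) μ := by
    refine hQ'1int.bdd_mul (c := ε⁻¹) ((hT.div (hg'.comp hZ)).aestronglyMeasurable) ?_
    filter_upwards [hpos'] with ω h
    exact hdivb (T ω) _ (hT1 ω) h.1
  have ic2 : Integrable (fun ω => (T ω / (1 - g' (Z ω))) * Q' 0 (Z ω)) μ := by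
    refine hQ'0int.bdd_mul (c := ε⁻¹) ((hT.div (measurable_const.sub (hg'.comp hZ))).aestronglyMeasurable) ?_
    filter_upwards [hpos'] with ω h
    exact hdivb (T ω) _ (hT1 ω) (by linarith [h.2])
  have ic : Integrable (fun ω => (-(Q' 1 (Z ω) / g' (Z ω)) - Q' 0 (Z ω) / (1 - g' (Z ω))) * T ω) μ := by
    have h' : Integrable (fun ω => -((T ω / g' (Z ω)) * Q' 1 (Z ω))
        - (T ω / (1 - g' (Z ω))) * Q' 0 (Z ω)) μ := ic1.neg.sub ic2
    exact h'.congr (ae_of_all _ fun ω => by ring)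
  have id1 : Integrable (fun ω => (1 / (1 - g' (Z ω))) * Q' 0 (Z ω)) μ := by
    refine hQ'0int.bdd_mul (c := ε⁻¹)
      ((measurable_const.div (measurable_const.sub (hg'.comp hZ))).aestronglyMeasurable) ?_
    filter_upwards [hpos'] with ω h
    exact hdivb 1 _ (by norm_num) (by linarith [h.2])
  have idd : Integrable (fun ω => Q' 0 (Z ω) / (1 - g' (Z ω)) + (Q' 1 (Z ω) - Q' 0 (Z ω))) μ := by
    have h' : Integrable (fun ω => (1 / (1 - g' (Z ω))) * Q' 0 (Z ω)
        + (Q' 1 (Z ω) - Q' 0 (Z ω))) μ := id1.add (hQ'1int.sub hQ'0int)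
    exact h'.congr (ae_of_all _ fun ω => by ring)
  -- integrability of the pieces after conditioning
  have hgb : ∀ᵐ ω ∂μ, |g (Z ω)| ≤ 1 := by
    filter_upwards [hpos] with ω h
    exact abs_le.mpr ⟨by linarith, by linarith⟩
  have ia' : Integrable (fun ω => (1 / g' (Z ω)) * (Q 1 (Z ω) * g (Z ω))) μ := by
    have h' : Integrable (fun ω => (g (Z ω) / g' (Z ω)) * Q 1 (Z ω)) μ := by
      refine hQ1int.bdd_mul (c := ε⁻¹) (((hg.comp hZ).div (hg'.comp hZ)).aestronglyMeasurable) ?_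
      filter_upwards [hpos', hgb] with ω h hb
      exact hdivb _ _ hb h.1
    exact h'.congr (ae_of_all _ fun ω => by ring)
  have ib' : Integrable (fun ω => (-(1 / (1 - g' (Z ω)))) * (Q 0 (Z ω) * (1 - g (Z ω)))) μ := by
    have h' : Integrable (fun ω => (-((1 - g (Z ω)) / (1 - g' (Z ω)))) * Q 0 (Z ω)) μ := by
      refine hQ0int.bdd_mul (c := ε⁻¹)
        (((measurable_const.sub (hg.comp hZ)).div
          (measurable_const.sub (hg'.comp hZ))).neg.aestronglyMeasurable) ?_
      filter_upwards [hpos, hpos'] with ω h h'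
      rw [norm_neg]
      exact hdivb _ _ (abs_le.mpr ⟨by linarith, by linarith⟩) (by linarith [h'.2])
    exact h'.congr (ae_of_all _ fun ω => by ring)
  have ic1' : Integrable (fun ω => (g (Z ω) / g' (Z ω)) * Q' 1 (Z ω)) μ := by
    refine hQ'1int.bdd_mul (c := ε⁻¹) (((hg.comp hZ).div (hg'.comp hZ)).aestronglyMeasurable) ?_
    filter_upwards [hpos', hgb] with ω h hb
    exact hdivb _ _ hb h.1
  have ic2' : Integrable (fun ω => (g (Z ω) / (1 - g' (Z ω))) * Q' 0 (Z ω)) μ := by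
    refine hQ'0int.bdd_mul (c := ε⁻¹)
      (((hg.comp hZ).div (measurable_const.sub (hg'.comp hZ))).aestronglyMeasurable) ?_
    filter_upwards [hpos', hgb] with ω h hb
    exact hdivb _ _ hb (by linarith [h.2])
  have ic' : Integrable (fun ω => (-(Q' 1 (Z ω) / g' (Z ω)) - Q' 0 (Z ω) / (1 - g' (Z ω)))
      * g (Z ω)) μ := by
    have h' : Integrable (fun ω => -((g (Z ω) / g' (Z ω)) * Q' 1 (Z ω))
        - (g (Z ω) / (1 - g' (Z ω))) * Q' 0 (Z ω)) μ := ic1'.neg.sub ic2'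
    exact h'.congr (ae_of_all _ fun ω => by ring)
  -- the three conditioning identities
  have e1 : ∫ ω, (1 / g' (Z ω)) * ((if T ω = 1 then (1:ℝ) else 0) * Y ω) ∂μ
      = ∫ ω, (1 / g' (Z ω)) * (Q 1 (Z ω) * g (Z ω)) ∂μ := by
    refine (key_aux μ Z hZ (fun x => 1 / g' x) (measurable_const.div hg')
      (fun ω => (if T ω = 1 then (1:ℝ) else 0) * Y ω) hf1int ia).trans ?_
    refine integral_congr_ae ?_
    filter_upwards [hQ1] with ω h
    rw [h]
  have e2 : ∫ ω, (-(1 / (1 - g' (Z ω)))) * ((if T ω = 0 then (1:ℝ) else 0) * Y ω) ∂μ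
      = ∫ ω, (-(1 / (1 - g' (Z ω)))) * (Q 0 (Z ω) * (1 - g (Z ω))) ∂μ := by
    refine (key_aux μ Z hZ (fun x => -(1 / (1 - g' x)))
      ((measurable_const.div (measurable_const.sub hg')).neg)
      (fun ω => (if T ω = 0 then (1:ℝ) else 0) * Y ω) hf0int ib).trans ?_
    refine integral_congr_ae ?_
    filter_upwards [hQ0] with ω h
    rw [h]
  have e3 : ∫ ω, (-(Q' 1 (Z ω) / g' (Z ω)) - Q' 0 (Z ω) / (1 - g' (Z ω))) * T ω ∂μ
      = ∫ ω, (-(Q' 1 (Z ω) / g' (Z ω)) - Q' 0 (Z ω) / (1 - g' (Z ω))) * g (Z ω) ∂μ := by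
    refine (key_aux μ Z hZ (fun x => -(Q' 1 x / g' x) - Q' 0 x / (1 - g' x))
      ((((hQ'meas 1).div hg').neg).sub ((hQ'meas 0).div (measurable_const.sub hg')))
      T hTint ic).trans ?_
    refine integral_congr_ae ?_
    filter_upwards [hgdef] with ω h
    rw [← h]
  -- pointwise decomposition of the estimating function
  have hpoint : (fun ω => T ω / g' (Z ω) * (Y ω - Q' 1 (Z ω))
        - (1 - T ω) / (1 - g' (Z ω)) * (Y ω - Q' 0 (Z ω))
        + (Q' 1 (Z ω) - Q' 0 (Z ω)) - ψ₀)
      = fun ω => ((1 / g' (Z ω)) * ((if T ω = 1 then (1:ℝ) else 0) * Y ω)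
          + ((-(1 / (1 - g' (Z ω)))) * ((if T ω = 0 then (1:ℝ) else 0) * Y ω)
            + ((-(Q' 1 (Z ω) / g' (Z ω)) - Q' 0 (Z ω) / (1 - g' (Z ω))) * T ω
              + (Q' 0 (Z ω) / (1 - g' (Z ω)) + (Q' 1 (Z ω) - Q' 0 (Z ω))))))
          - ψ₀ := by
    funext ω
    rcases hTbin ω with h | h
    · rw [h]; norm_num; try ring
    · rw [h]; norm_num; try ring
  -- the bias identity
  have key1 : ∫ ω, (T ω / g' (Z ω) * (Y ω - Q' 1 (Z ω))
        - (1 - T ω) / (1 - g' (Z ω)) * (Y ω - Q' 0 (Z ω))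
        + (Q' 1 (Z ω) - Q' 0 (Z ω)) - ψ₀) ∂μ
      = ∫ ω, ((g (Z ω) - g' (Z ω)) / g' (Z ω) * (Q 1 (Z ω) - Q' 1 (Z ω))
          + (g (Z ω) - g' (Z ω)) / (1 - g' (Z ω)) * (Q 0 (Z ω) - Q' 0 (Z ω))) ∂μ := by
    have hrho : ∫ ω, ((g (Z ω) - g' (Z ω)) / g' (Z ω) * (Q 1 (Z ω) - Q' 1 (Z ω))
          + (g (Z ω) - g' (Z ω)) / (1 - g' (Z ω)) * (Q 0 (Z ω) - Q' 0 (Z ω))) ∂μ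
        = (∫ ω, (1 / g' (Z ω)) * (Q 1 (Z ω) * g (Z ω)) ∂μ
            + (∫ ω, (-(1 / (1 - g' (Z ω)))) * (Q 0 (Z ω) * (1 - g (Z ω))) ∂μ
              + (∫ ω, (-(Q' 1 (Z ω) / g' (Z ω)) - Q' 0 (Z ω) / (1 - g' (Z ω))) * g (Z ω) ∂μ
                + ∫ ω, (Q' 0 (Z ω) / (1 - g' (Z ω)) + (Q' 1 (Z ω) - Q' 0 (Z ω))) ∂μ)))
          - ψ₀ := by
      have h1 : ∫ ω, ((g (Z ω) - g' (Z ω)) / g' (Z ω) * (Q 1 (Z ω) - Q' 1 (Z ω))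
            + (g (Z ω) - g' (Z ω)) / (1 - g' (Z ω)) * (Q 0 (Z ω) - Q' 0 (Z ω))) ∂μ
          = ∫ ω, (((1 / g' (Z ω)) * (Q 1 (Z ω) * g (Z ω))
              + ((-(1 / (1 - g' (Z ω)))) * (Q 0 (Z ω) * (1 - g (Z ω)))
                + ((-(Q' 1 (Z ω) / g' (Z ω)) - Q' 0 (Z ω) / (1 - g' (Z ω))) * g (Z ω)
                  + (Q' 0 (Z ω) / (1 - g' (Z ω)) + (Q' 1 (Z ω) - Q' 0 (Z ω))))))
              - (Q 1 (Z ω) - Q 0 (Z ω))) ∂μ := by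
        refine integral_congr_ae ?_
        filter_upwards [hpos'] with ω h
        have h0 : g' (Z ω) ≠ 0 := ne_of_gt (lt_of_lt_of_le hε h.1)
        have h1' : (1:ℝ) - g' (Z ω) ≠ 0 := ne_of_gt (by linarith [h.2])
        field_simp
        ring
      have isum' : Integrable (fun ω => (1 / g' (Z ω)) * (Q 1 (Z ω) * g (Z ω))
          + ((-(1 / (1 - g' (Z ω)))) * (Q 0 (Z ω) * (1 - g (Z ω)))
            + ((-(Q' 1 (Z ω) / g' (Z ω)) - Q' 0 (Z ω) / (1 - g' (Z ω))) * g (Z ω)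
              + (Q' 0 (Z ω) / (1 - g' (Z ω)) + (Q' 1 (Z ω) - Q' 0 (Z ω)))))) μ :=
        ia'.add (ib'.add (ic'.add idd))
      have iQQ : Integrable (fun ω => Q 1 (Z ω) - Q 0 (Z ω)) μ := hQ1int.sub hQ0int
      rw [h1, integral_sub isum' iQQ,
        split_aux _ _ _ _ ia' ib' ic' idd, ← hψ₀]
    have isum : Integrable (fun ω => (1 / g' (Z ω)) * ((if T ω = 1 then (1:ℝ) else 0) * Y ω)
        + ((-(1 / (1 - g' (Z ω)))) * ((if T ω = 0 then (1:ℝ) else 0) * Y ω)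
          + ((-(Q' 1 (Z ω) / g' (Z ω)) - Q' 0 (Z ω) / (1 - g' (Z ω))) * T ω
            + (Q' 0 (Z ω) / (1 - g' (Z ω)) + (Q' 1 (Z ω) - Q' 0 (Z ω)))))) μ :=
      ia.add (ib.add (ic.add idd))
    rw [hpoint, integral_sub isum (integrable_const ψ₀),
      split_aux _ _ _ _ ia ib ic idd, e1, e2, e3, integral_const, probReal_univ, one_smul, hrho]
  rw [key1]
  -- now the Cauchy–Schwarz bound
  have hgg'2 : MemLp (fun ω => g' (Z ω) - g (Z ω)) 2 μ := by
    refine MemLp.of_bound (((hg'.comp hZ).sub (hg.comp hZ)).aestronglyMeasurable) 2 ?_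
    filter_upwards [hpos, hpos'] with ω h h'
    rw [Real.norm_eq_abs]
    exact abs_le.mpr ⟨by linarith, by linarith⟩
  have iP1 : Integrable (fun ω => |g' (Z ω) - g (Z ω)| * |Q' 1 (Z ω) - Q 1 (Z ω)|) μ := by
    refine ((hQ'1int.sub hQ1int).abs).bdd_mul (c := 2)
      (((hg'.comp hZ).sub (hg.comp hZ)).abs.aestronglyMeasurable) ?_
    filter_upwards [hpos, hpos'] with ω h h'
    rw [Real.norm_eq_abs, abs_abs]
    exact abs_le.mpr ⟨by linarith, by linarith⟩
  have iP0 : Integrable (fun ω => |g' (Z ω) - g (Z ω)| * |Q' 0 (Z ω) - Q 0 (Z ω)|) μ := by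
    refine ((hQ'0int.sub hQ0int).abs).bdd_mul (c := 2)
      (((hg'.comp hZ).sub (hg.comp hZ)).abs.aestronglyMeasurable) ?_
    filter_upwards [hpos, hpos'] with ω h h'
    rw [Real.norm_eq_abs, abs_abs]
    exact abs_le.mpr ⟨by linarith, by linarith⟩
  have hCS : ∀ d : ℝ, (d = 0 ∨ d = 1) →
      ∫ ω, |g' (Z ω) - g (Z ω)| * |Q' d (Z ω) - Q d (Z ω)| ∂μ
        ≤ δ * (n : ℝ) ^ (-(1:ℝ)/2) := by
    intro d hd
    refine le_trans (cs_aux μ _ _ hgg'2 ((hQ'2 d hd).sub (hQ2 d hd))) ?_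
    rw [mul_comm]
    exact hrate d hd
  have key_ineq : ∀ x y c : ℝ, ε ≤ |y| → |x / y * c| ≤ ε⁻¹ * (|x| * |c|) := by
    intro x y c hy
    rw [abs_mul, abs_div, div_eq_inv_mul, mul_assoc]
    refine mul_le_mul_of_nonneg_right ?_ (by positivity)
    exact inv_anti₀ hε hy
  have habs2 : ∀ᵐ ω ∂μ, ‖(g (Z ω) - g' (Z ω)) / g' (Z ω) * (Q 1 (Z ω) - Q' 1 (Z ω))
        + (g (Z ω) - g' (Z ω)) / (1 - g' (Z ω)) * (Q 0 (Z ω) - Q' 0 (Z ω))‖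
      ≤ ε⁻¹ * (|g' (Z ω) - g (Z ω)| * |Q' 1 (Z ω) - Q 1 (Z ω)|)
        + ε⁻¹ * (|g' (Z ω) - g (Z ω)| * |Q' 0 (Z ω) - Q 0 (Z ω)|) := by
    filter_upwards [hpos'] with ω h
    have hb : ε ≤ |g' (Z ω)| := le_trans h.1 (le_abs_self _)
    have hb2 : ε ≤ |1 - g' (Z ω)| := le_trans (by linarith [h.2]) (le_abs_self _)
    rw [Real.norm_eq_abs]
    refine (abs_add_le _ _).trans (add_le_add ?_ ?_)
    · have h1 := key_ineq (g (Z ω) - g' (Z ω)) (g' (Z ω)) (Q 1 (Z ω) - Q' 1 (Z ω)) hb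
      rw [abs_sub_comm (g (Z ω)), abs_sub_comm (Q 1 (Z ω))] at h1
      exact h1
    · have h1 := key_ineq (g (Z ω) - g' (Z ω)) (1 - g' (Z ω)) (Q 0 (Z ω) - Q' 0 (Z ω)) hb2
      rw [abs_sub_comm (g (Z ω)), abs_sub_comm (Q 0 (Z ω))] at h1
      exact h1
  have hinv : (0:ℝ) ≤ ε⁻¹ := le_of_lt (inv_pos.mpr hε)
  calc |∫ ω, ((g (Z ω) - g' (Z ω)) / g' (Z ω) * (Q 1 (Z ω) - Q' 1 (Z ω))
          + (g (Z ω) - g' (Z ω)) / (1 - g' (Z ω)) * (Q 0 (Z ω) - Q' 0 (Z ω))) ∂μ|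
      = ‖∫ ω, ((g (Z ω) - g' (Z ω)) / g' (Z ω) * (Q 1 (Z ω) - Q' 1 (Z ω))
          + (g (Z ω) - g' (Z ω)) / (1 - g' (Z ω)) * (Q 0 (Z ω) - Q' 0 (Z ω))) ∂μ‖ :=
        (Real.norm_eq_abs _).symm
    _ ≤ ∫ ω, ‖(g (Z ω) - g' (Z ω)) / g' (Z ω) * (Q 1 (Z ω) - Q' 1 (Z ω))
          + (g (Z ω) - g' (Z ω)) / (1 - g' (Z ω)) * (Q 0 (Z ω) - Q' 0 (Z ω))‖ ∂μ :=
        norm_integral_le_integral_norm _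
    _ ≤ ∫ ω, (ε⁻¹ * (|g' (Z ω) - g (Z ω)| * |Q' 1 (Z ω) - Q 1 (Z ω)|)
          + ε⁻¹ * (|g' (Z ω) - g (Z ω)| * |Q' 0 (Z ω) - Q 0 (Z ω)|)) ∂μ :=
        integral_mono_of_nonneg (ae_of_all _ fun ω => norm_nonneg _)
          ((iP1.const_mul ε⁻¹).add (iP0.const_mul ε⁻¹)) habs2
    _ = ε⁻¹ * ∫ ω, |g' (Z ω) - g (Z ω)| * |Q' 1 (Z ω) - Q 1 (Z ω)| ∂μ
          + ε⁻¹ * ∫ ω, |g' (Z ω) - g (Z ω)| * |Q' 0 (Z ω) - Q 0 (Z ω)| ∂μ := by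
        rw [integral_add (iP1.const_mul ε⁻¹) (iP0.const_mul ε⁻¹),
          integral_const_mul, integral_const_mul]
    _ ≤ ε⁻¹ * (δ * (n : ℝ) ^ (-(1:ℝ)/2)) + ε⁻¹ * (δ * (n : ℝ) ^ (-(1:ℝ)/2)) :=
        add_le_add (mul_le_mul_of_nonneg_left (hCS 1 (Or.inr rfl)) hinv)
          (mul_le_mul_of_nonneg_left (hCS 0 (Or.inl rfl)) hinv)
    _ = 2 / ε * δ * (n : ℝ) ^ (-(1:ℝ)/2) := by
        field_simp
        ring
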